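/- Under the General Assumption, suppose l₁ + l₂ = t and l₁ > 1 and l₂ > 1. If l₁ < s₁^(1) and l₂ > s₂^(d), then f^(d)[U]_l = 0. -/

import Mathlib

open scoped BigOperators

namespace BMS

/-- Index pairs in ℕ × ℕ. -/
abbrev Pair : Type := ℕ × ℕ

/-- The componentwise partial order `⪯` on ℕ×ℕ. -/
def Preceq (n m : Pair) : Prop := n.1 ≤ m.1 ∧ n.2 ≤ m.2

instance (n m : Pair) : Decidable (Preceq n m) :=
  inferInstanceAs (Decidable (n.1 ≤ m.1 ∧ n.2 ≤ m.2))

/-- The lexicographic order on exponents, with `X₁ > X₂`. -/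
def LexLt (a b : Pair) : Prop := a.1 < b.1 ∨ (a.1 = b.1 ∧ a.2 < b.2)

/-- The graded order on exponents, with `X₂ > X₁`. -/
def GrLt (a b : Pair) : Prop :=
  a.1 + a.2 < b.1 + b.2 ∨ (a.1 + a.2 = b.1 + b.2 ∧ a.2 < b.2)

section
variable {L : Type*} [Field L]

/-- `s` is the `lt`-largest exponent occurring in (the support of) the polynomial `f`,
i.e. `LP f = s`. -/
def IsLP (lt : Pair → Pair → Prop) (f : Pair →₀ L) (s : Pair) : Prop :=
  s ∈ f.support ∧ ∀ m ∈ f.support, m = s ∨ lt m s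

/-- The value `f[U]_n`, where `s = LP f`. -/
def evalArr (U : Pair → L) (f : Pair →₀ L) (s n : Pair) : L :=
  if Preceq s n then ∑ m ∈ f.support, f m * U (m.1 + n.1 - s.1, m.2 + n.2 - s.2) else 0

/-- `f` (with `LP f = s`) generates the finite subarray `u^l`,
i.e. `f[U]_k = 0` for every `k` with `LP f ⪯ k` and `k <_T l`. -/
def GeneratesUpTo (lt : Pair → Pair → Prop) (U : Pair → L) (f : Pair →₀ L)
    (s l : Pair) : Prop :=
  ∀ k : Pair, Preceq s k → lt k l → evalArr U f s k = 0

/-- `f` generates the whole doubly periodic array `U`, i.e. `f ∈ Λ(U)`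
(the zero polynomial generates `U` by convention). -/
def GeneratesTable (lt : Pair → Pair → Prop) (U : Pair → L) (f : Pair →₀ L) : Prop :=
  f = 0 ∨ ∃ s : Pair, IsLP lt f s ∧ ∀ n : Pair, Preceq s n → evalArr U f s n = 0

/-- The footprint `Δ(F)` determined by the defining points `s 0, …, s (d-1)`:
`Δ(F) = ⋃_{i=1}^{d-1} Δ_{(s₁⁽ⁱ⁾ - 1, s₂⁽ⁱ⁺¹⁾ - 1)}`. -/
def DeltaF (d : ℕ) (s : Fin d → Pair) : Set Pair :=
  {n | ∃ i : Fin d, ∃ h : (i : ℕ) + 1 < d,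
    n.1 < (s i).1 ∧ n.2 < (s ⟨(i : ℕ) + 1, h⟩).2}

/-- `{f 0, …, f (d-1)}`, with `LP (f i) = s i`, is a minimal set of polynomials
for the subarray `u^l`. -/
structure IsMinimalSet (lt : Pair → Pair → Prop) (U : Pair → L) (l : Pair) (d : ℕ)
    (f : Fin d → (Pair →₀ L)) (s : Fin d → Pair) : Prop where
  isLP : ∀ i, IsLP lt (f i) (s i)
  gen : ∀ i, GeneratesUpTo lt U (f i) (s i) l
  anti1 : ∀ i j : Fin d, i < j → (s j).1 < (s i).1
  mono2 : ∀ i j : Fin d, i < j → (s i).2 < (s j).2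
  last1 : ∀ h : 0 < d, (s ⟨d - 1, Nat.sub_lt h Nat.one_pos⟩).1 = 0
  first2 : ∀ h : 0 < d, (s ⟨0, h⟩).2 = 0
  minimal : ∀ (g : Pair →₀ L) (sg : Pair), IsLP lt g sg → sg ∈ DeltaF d s →
    ¬ GeneratesUpTo lt U g sg l

/-- A finite set `G ⊆ Λ(U)` is a Groebner basis for the ideal `Λ(U)` w.r.t. `lt`:
for every nonzero `f ∈ Λ(U)` there is `g ∈ G` with `X^{LP g} ∣ X^{LP f}`. -/
def IsGroebnerBasis (lt : Pair → Pair → Prop) (U : Pair → L)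
    (G : Set (Pair →₀ L)) : Prop :=
  G.Finite ∧ (∀ g ∈ G, GeneratesTable lt U g) ∧
  ∀ fp : Pair →₀ L, fp ≠ 0 → GeneratesTable lt U fp →
    ∀ sf : Pair, IsLP lt fp sf → ∃ g ∈ G, ∃ sg : Pair, IsLP lt g sg ∧ Preceq sg sf

/-- `c • X^a * g` : multiply the polynomial `g` by the monomial `c·X₁^{a.1}·X₂^{a.2}`. -/
noncomputable def shiftScale (c : L) (a : Pair) (g : Pair →₀ L) : Pair →₀ L :=
  c • Finsupp.mapDomain (· + a) g

/-- The set of indexes `S(t)`. -/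
def Sset (t : ℕ) : Set Pair :=
  {p | (p.1 = 0 ∧ p.2 ≤ 2 * t - 1) ∨ (p.2 = 0 ∧ p.1 ≤ 2 * t - 1) ∨
    (p.1 ≠ 0 ∧ p.2 ≠ 0 ∧ p.1 + p.2 ≤ t)}

/-- `S(t)` satisfies the l-condition: `u_{(0,j)} ≠ 0` for some `j < t`. -/
def LCond (U : Pair → L) (t : ℕ) : Prop := ∃ j : ℕ, j < t ∧ U (0, j) ≠ 0

/-- `S(t)` satisfies the g-condition: `u_{(i,j)} ≠ 0` for some `(i,j)` with `i + j = 1`. -/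
def GCond (U : Pair → L) (t : ℕ) : Prop := ∃ p : Pair, p.1 + p.2 = 1 ∧ U p ≠ 0

end

section
variable {F L : Type*} [Field F] [Field L] [Algebra F L]

/-- Evaluation of (the canonical representative of) `e ∈ 𝔽(r₁,r₂)` at a point of `L × L`. -/
def polyEval (e : Pair →₀ F) (x y : L) : L :=
  ∑ m ∈ e.support, algebraMap F L (e m) * x ^ m.1 * y ^ m.2

/-- `U` is the syndrome table afforded by `τ` and `e`:
`u_n = e(α₁^{τ₁+n₁}, α₂^{τ₂+n₂})`, where `e` is a canonical representative
(exponents below `(r₁, r₂)`) and `τ ∈ ℤ_{r₁} × ℤ_{r₂}`. -/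
def IsSyndromeTable (r₁ r₂ : ℕ) (α₁ α₂ : L) (τ : Pair) (e : Pair →₀ F)
    (U : Pair → L) : Prop :=
  (∀ m ∈ e.support, m.1 < r₁ ∧ m.2 < r₂) ∧ τ.1 < r₁ ∧ τ.2 < r₂ ∧
  ∀ n : Pair, U n = polyEval e (α₁ ^ (τ.1 + n.1)) (α₂ ^ (τ.2 + n.2))

/-- Basic data of the general assumption: `q` a prime power, `𝔽 = 𝔽_q`,
`gcd(q, r₁r₂) = 1`, `αᵢ` a primitive `rᵢ`-th root of unity in the extension `𝕃`,
`U` the syndrome table afforded by `τ` and `e`, and `ω(e) ≤ t ≤ ⌊rᵢ/2⌋`. -/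
structure Setup (q r₁ r₂ t : ℕ) {F L : Type*} [Field F] [Fintype F] [Field L]
    [Algebra F L] (α₁ α₂ : L) (τ : Pair) (e : Pair →₀ F) (U : Pair → L) : Prop where
  prime_pow : ∃ p n : ℕ, p.Prime ∧ 0 < n ∧ q = p ^ n
  card_F : Fintype.card F = q
  coprime : Nat.Coprime q (r₁ * r₂)
  prim1 : IsPrimitiveRoot α₁ r₁
  prim2 : IsPrimitiveRoot α₂ r₂
  syndrome : IsSyndromeTable r₁ r₂ α₁ α₂ τ e U
  weight_le : e.support.card ≤ t
  t_le1 : t ≤ r₁ / 2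
  t_le2 : t ≤ r₂ / 2

end




-- ==================== Auxiliary material for statement6 ====================

section Statement6Aux

lemma lt_cases_irrefl {lt : Pair → Pair → Prop} (hlt : lt = LexLt ∨ lt = GrLt)
    (a : Pair) : ¬ lt a a := by
  rcases hlt with rfl | rfl <;> (intro h; simp only [LexLt, GrLt] at h; omega)

lemma lt_cases_trans {lt : Pair → Pair → Prop} (hlt : lt = LexLt ∨ lt = GrLt)
    {a b c : Pair} (h1 : lt a b) (h2 : lt b c) : lt a c := by
  rcases hlt with rfl | rfl <;> (simp only [LexLt, GrLt] at *; omega)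

lemma lt_cases_total {lt : Pair → Pair → Prop} (hlt : lt = LexLt ∨ lt = GrLt)
    (a b : Pair) : a = b ∨ lt a b ∨ lt b a := by
  rcases hlt with rfl | rfl <;> (simp only [LexLt, GrLt, Prod.ext_iff]; omega)

lemma lt_shift' {lt : Pair → Pair → Prop} (hlt : lt = LexLt ∨ lt = GrLt)
    {a b b' : Pair} {x y : ℕ} (h : lt a b) (h1 : x + b.1 = b'.1 + a.1)
    (h2 : y + b.2 = b'.2 + a.2) : lt (x, y) b' := by
  rcases hlt with rfl | rfl <;> (simp only [LexLt, GrLt] at *; omega)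

lemma preceq_mk {a : Pair} {x y : ℕ} (h1 : a.1 ≤ x) (h2 : a.2 ≤ y) :
    Preceq a (x, y) := ⟨h1, h2⟩

lemma exists_lt_max {α : Type*} {lt : Pair → Pair → Prop} (hlt : lt = LexLt ∨ lt = GrLt)
    (T : Finset α) (v : α → Pair) (hT : T.Nonempty) :
    ∃ M ∈ T, ∀ b ∈ T, v b = v M ∨ lt (v b) (v M) := by
  classical
  induction T using Finset.induction_on with
  | empty => exact absurd hT (by simp)
  | @insert a T' hnotmem ih =>
    rcases T'.eq_empty_or_nonempty with rfl | hT'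
    · exact ⟨a, by simp, by simp⟩
    · obtain ⟨M, hM, hmax⟩ := ih hT'
      rcases lt_cases_total hlt (v a) (v M) with h | h | h
      · exact ⟨M, by simp [hM], by
          intro b hb
          rcases Finset.mem_insert.mp hb with rfl | hb'
          · exact Or.inl h
          · exact hmax b hb'⟩
      · exact ⟨M, by simp [hM], by
          intro b hb
          rcases Finset.mem_insert.mp hb with rfl | hb'
          · exact Or.inr h
          · exact hmax b hb'⟩
      · refine ⟨a, by simp, ?_⟩
        intro b hb
        rcases Finset.mem_insert.mp hb with rfl | hb'
        · exact Or.inl rfl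
        · rcases hmax b hb' with heq | hbM
          · rw [heq]; exact Or.inr h
          · exact Or.inr (lt_cases_trans hlt hbM h)

/-- The "monomial evaluation" of exponent `n` at point index `m`. -/
def phiF {L : Type*} [Field L] (α₁ α₂ : L) (n m : Pair) : L :=
  α₁ ^ (m.1 * n.1) * α₂ ^ (m.2 * n.2)

section Formulas
variable {F L : Type*} [Field F] [Field L] [Algebra F L]
variable (α₁ α₂ : L) (τ : Pair) (e : Pair →₀ F) {U : Pair → L}

lemma U_eq_sum (hU : ∀ n : Pair, U n = polyEval e (α₁ ^ (τ.1 + n.1)) (α₂ ^ (τ.2 + n.2)))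
    (n : Pair) :
    U n = ∑ m ∈ e.support,
      algebraMap F L (e m) * phiF α₁ α₂ τ m * phiF α₁ α₂ n m := by
  rw [hU n]
  unfold polyEval phiF
  refine Finset.sum_congr rfl fun m _ => ?_
  ring

lemma evalArr_eq_sum
    (hU : ∀ n : Pair, U n = polyEval e (α₁ ^ (τ.1 + n.1)) (α₂ ^ (τ.2 + n.2)))
    (f : Pair →₀ L) (s k : Pair) (hsk : Preceq s k) :
    evalArr U f s k = ∑ m ∈ e.support,
      algebraMap F L (e m) * phiF α₁ α₂ τ m *
        phiF α₁ α₂ (k.1 - s.1, k.2 - s.2) m *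
        (∑ i ∈ f.support, f i * phiF α₁ α₂ i m) := by
  unfold evalArr
  rw [if_pos hsk]
  have hterm : ∀ i ∈ f.support, f i * U (i.1 + k.1 - s.1, i.2 + k.2 - s.2)
      = ∑ m ∈ e.support, algebraMap F L (e m) * phiF α₁ α₂ τ m *
          phiF α₁ α₂ (k.1 - s.1, k.2 - s.2) m * (f i * phiF α₁ α₂ i m) := by
    intro i _
    obtain ⟨hks1, hks2⟩ := hsk
    rw [U_eq_sum α₁ α₂ τ e hU, Finset.mul_sum]
    refine Finset.sum_congr rfl fun m _ => ?_
    have hx1 : i.1 + k.1 - s.1 = i.1 + (k.1 - s.1) := by omega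
    have hx2 : i.2 + k.2 - s.2 = i.2 + (k.2 - s.2) := by omega
    unfold phiF
    simp only [hx1, hx2, Nat.mul_add, pow_add]
    ring
  rw [Finset.sum_congr rfl hterm, Finset.sum_comm]
  exact Finset.sum_congr rfl fun m _ => (Finset.mul_sum _ _ _).symm

end Formulas

lemma evalArr_shift {L : Type*} [Field L] (U : Pair → L) (f : Pair →₀ L)
    (sp : Pair) (x y : ℕ) :
    evalArr U f sp (sp.1 + x, sp.2 + y)
      = ∑ i ∈ f.support, f i * U (i.1 + x, i.2 + y) := by
  unfold evalArr
  rw [if_pos (preceq_mk (Nat.le_add_right _ _) (Nat.le_add_right _ _))]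
  refine Finset.sum_congr rfl fun i _ => ?_
  have h1 : i.1 + (sp.1 + x, sp.2 + y).1 - sp.1 = i.1 + x := by
    show i.1 + (sp.1 + x) - sp.1 = i.1 + x
    omega
  have h2 : i.2 + (sp.1 + x, sp.2 + y).2 - sp.2 = i.2 + y := by
    show i.2 + (sp.2 + y) - sp.2 = i.2 + y
    omega
  rw [h1, h2]

end Statement6Aux


set_option maxHeartbeats 1000000 in
/-- if l₁ < s₁⁽¹⁾ and l₂ > s₂⁽ᵈ⁾ then f⁽ᵈ⁾[U]_l = 0. -/
theorem statement6{q r₁ r₂ t : ℕ} {F L : Type*} [Field F] [Fintype F] [Field L]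
    [Algebra F L] {α₁ α₂ : L} {τ : Pair} {e : Pair →₀ F} {U : Pair → L}
    (hsetup : Setup q r₁ r₂ t α₁ α₂ τ e U)
{lt : Pair → Pair → Prop}
    (hord : (lt = LexLt ∧ LCond U t) ∨ (lt = GrLt ∧ GCond U t))
    {l : Pair} (hl : l ∈ Sset t)
    {d : ℕ} {f : Fin d → (Pair →₀ L)} {s : Fin d → Pair}
    (hmin : IsMinimalSet lt U l d f s)
    (hsum : l.1 + l.2 = t) (hl1 : 1 < l.1) (hl2 : 1 < l.2) (hd0 : 0 < d)
    (ha : l.1 < (s ⟨0, hd0⟩).1)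
    (hb : (s ⟨d - 1, Nat.sub_lt hd0 Nat.one_pos⟩).2 < l.2) :
    evalArr U (f ⟨d - 1, Nat.sub_lt hd0 Nat.one_pos⟩)
      (s ⟨d - 1, Nat.sub_lt hd0 Nat.one_pos⟩) l = 0 := by
  classical
  by_contra hne
  obtain ⟨-, -, -, hU⟩ := hsetup.syndrome
  have hlt : lt = LexLt ∨ lt = GrLt := by
    rcases hord with ⟨h, -⟩ | ⟨h, -⟩
    · exact Or.inl h
    · exact Or.inr h
  set dIdx : Fin d := ⟨d - 1, Nat.sub_lt hd0 Nat.one_pos⟩ with hdIdx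
  have hs1 : (s dIdx).1 = 0 := hmin.last1 hd0
  have hd2 : 2 ≤ d := by
    by_contra hcon
    have h0 : (⟨0, hd0⟩ : Fin d) = dIdx := by
      apply Fin.ext
      rw [hdIdx]
      show 0 = d - 1
      omega
    rw [h0] at ha
    omega
  set s2 : ℕ := (s dIdx).2 with hs2
  have hbb : s2 < l.2 := hb
  set c : ℕ := l.2 - s2 with hc
  have hc1 : 1 ≤ c := by omega
  -- Sakata's lemma: every point of the rectangle `Δ_{(l.1, c)}` is "dead".
  have claimC : ∀ n : Pair, n.1 ≤ l.1 → n.2 ≤ c →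
      ∀ g : Pair →₀ L, IsLP lt g n →
      (∀ k : Pair, Preceq n k → (lt k l ∨ k = l) → evalArr U g n k = 0) → False := by
    intro n hn1 hn2 g hglp hggen
    obtain ⟨hgs, hgmax⟩ := hglp
    obtain ⟨hfs, hfmax⟩ := hmin.isLP dIdx
    set β1 : ℕ := l.1 - n.1 with hβ1
    set β2 : ℕ := c - n.2 with hβ2
    set S : L := ∑ i ∈ (f dIdx).support, ∑ j ∈ g.support,
        f dIdx i * g j * U (i.1 + j.1 + β1, i.2 + j.2 + β2) with hSdef
    have hS1 : S = ∑ j ∈ g.support, g j * evalArr U (f dIdx) (s dIdx)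
        ((s dIdx).1 + (j.1 + β1), (s dIdx).2 + (j.2 + β2)) := by
      rw [hSdef, Finset.sum_comm]
      refine Finset.sum_congr rfl fun j _ => ?_
      rw [evalArr_shift, Finset.mul_sum]
      refine Finset.sum_congr rfl fun i _ => ?_
      rw [show ((i.1 + (j.1 + β1) : ℕ), (i.2 + (j.2 + β2) : ℕ))
          = ((i.1 + j.1 + β1 : ℕ), (i.2 + j.2 + β2 : ℕ)) from by
        simp only [Prod.mk.injEq]; omega]
      ring
    have hS2 : S = g n * evalArr U (f dIdx) (s dIdx) l := by
      rw [hS1]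
      rw [Finset.sum_eq_single n ?h1 ?h2]
      · rw [show (((s dIdx).1 + (n.1 + β1) : ℕ), ((s dIdx).2 + (n.2 + β2) : ℕ)) = l from by
          rw [Prod.ext_iff]
          constructor <;> simp <;> omega]
      case h1 =>
        intro j hj hjn
        have hjlt : lt j n := (hgmax j hj).resolve_left hjn
        rw [hmin.gen dIdx _ (preceq_mk (by omega) (by omega))
          (lt_shift' hlt hjlt (by omega) (by omega)), mul_zero]
      case h2 =>
        intro hn
        exact absurd hgs hn
    have hS3 : S = 0 := by
      rw [hSdef]
      refine Finset.sum_eq_zero fun i hi => ?_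
      have hinner : ∑ j ∈ g.support, f dIdx i * g j * U (i.1 + j.1 + β1, i.2 + j.2 + β2)
          = f dIdx i * evalArr U g n (n.1 + (i.1 + β1), n.2 + (i.2 + β2)) := by
        rw [evalArr_shift, Finset.mul_sum]
        refine Finset.sum_congr rfl fun j _ => ?_
        rw [show ((j.1 + (i.1 + β1) : ℕ), (j.2 + (i.2 + β2) : ℕ))
            = ((i.1 + j.1 + β1 : ℕ), (i.2 + j.2 + β2 : ℕ)) from by
          simp only [Prod.mk.injEq]; omega]
        ring
      rw [hinner]
      rcases hfmax i hi with heq | hilt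
      · rw [hggen _ (preceq_mk (by omega) (by omega)) (Or.inr (by
          rw [Prod.ext_iff]
          constructor <;> simp <;> (rw [heq]; omega))), mul_zero]
      · rw [hggen _ (preceq_mk (by omega) (by omega))
          (Or.inl (lt_shift' hlt hilt (by omega) (by omega))), mul_zero]
    have hE : evalArr U (f dIdx) (s dIdx) l = 0 := by
      have h := hS2.symm.trans hS3
      rcases mul_eq_zero.mp h with h' | h'
      · exact absurd h' (Finsupp.mem_support_iff.mp hgs)
      · exact h'
    exact hne hE
  -- the column `{(0,j) : j < s2}` is dead, by minimality.
  have claimD : ∀ j : ℕ, j < s2 → ∀ g : Pair →₀ L, IsLP lt g ((0:ℕ), j) →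
      (∀ k : Pair, Preceq ((0:ℕ), j) k → (lt k l ∨ k = l) → evalArr U g ((0:ℕ), j) k = 0)
      → False := by
    intro j hj g hglp hggen
    have hi2 : d - 2 < d := by omega
    have hlt12 : (⟨d - 2, hi2⟩ : Fin d) < dIdx := by
      rw [Fin.lt_def, hdIdx]
      show d - 2 < d - 1
      omega
    have h1pos : 0 < (s ⟨d - 2, hi2⟩).1 := by
      have h := hmin.anti1 _ dIdx hlt12
      omega
    have key : ∀ hh : (((⟨d - 2, hi2⟩ : Fin d) : ℕ) + 1 < d),
        ((0:ℕ), j).2 < (s ⟨((⟨d - 2, hi2⟩ : Fin d) : ℕ) + 1, hh⟩).2 := by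
      intro hh
      have hidx : (⟨((⟨d - 2, hi2⟩ : Fin d) : ℕ) + 1, hh⟩ : Fin d) = dIdx := by
        apply Fin.ext
        rw [hdIdx]
        show d - 2 + 1 = d - 1
        omega
      rw [hidx]
      show j < (s dIdx).2
      omega
    have hmem : ((0:ℕ), j) ∈ DeltaF d s :=
      ⟨⟨d - 2, hi2⟩, by show d - 2 + 1 < d; omega, h1pos, key _⟩
    exact hmin.minimal g ((0:ℕ), j) hglp hmem fun k hk1 hk2 => hggen k hk1 (Or.inl hk2)
  -- evaluation vectors
  set Phi : Pair → ({x // x ∈ e.support} → L) := fun p mm => phiF α₁ α₂ p (↑mm) with hPhi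
  -- dead points give vectors outside the span of lt-smaller vectors
  have claimSpan : ∀ n : Pair,
      (∀ g : Pair →₀ L, IsLP lt g n →
        (∀ k : Pair, Preceq n k → (lt k l ∨ k = l) → evalArr U g n k = 0) → False) →
      Phi n ∉ Submodule.span L (Phi '' {m : Pair | lt m n}) := by
    intro n hdead hspan
    rw [Finsupp.mem_span_image_iff_linearCombination] at hspan
    obtain ⟨cc, hccsupp, hcc⟩ := hspan
    rw [Finsupp.mem_supported] at hccsupp
    have hccn : cc n = 0 := by
      by_contra h
      exact lt_cases_irrefl hlt n (hccsupp (Finsupp.mem_support_iff.mpr h))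
    set g : Pair →₀ L := Finsupp.single n 1 - cc with hg
    have hgn : g n = (1:L) := by
      rw [hg, Finsupp.sub_apply, Finsupp.single_eq_same, hccn, sub_zero]
    have hsupp : g.support ⊆ insert n cc.support := by
      intro m hm
      have h2 := Finsupp.support_sub hm
      rcases Finset.mem_union.mp h2 with h | h
      · have h3 := Finsupp.support_single_subset h
        rw [Finset.mem_singleton] at h3
        exact Finset.mem_insert.mpr (Or.inl h3)
      · exact Finset.mem_insert.mpr (Or.inr h)
    have hglp : IsLP lt g n := by
      refine ⟨Finsupp.mem_support_iff.mpr (by rw [hgn]; exact one_ne_zero), ?_⟩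
      intro m hm
      rcases Finset.mem_insert.mp (hsupp hm) with rfl | h
      · exact Or.inl rfl
      · exact Or.inr (hccsupp h)
    have hev : ∀ m ∈ e.support, (∑ i ∈ g.support, g i * phiF α₁ α₂ i m) = 0 := by
      intro m hm
      have h1 : (cc.sum fun i a => a * phiF α₁ α₂ i m) = phiF α₁ α₂ n m := by
        have h := congrFun hcc (⟨m, hm⟩ : {x // x ∈ e.support})
        rw [Finsupp.linearCombination_apply] at h
        simp only [Finsupp.sum, Finset.sum_apply, Pi.smul_apply, smul_eq_mul, hPhi] at h
        simpa [Finsupp.sum] using h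
      have hnot : n ∉ cc.support := Finsupp.notMem_support_iff.mpr hccn
      calc ∑ i ∈ g.support, g i * phiF α₁ α₂ i m
          = ∑ i ∈ insert n cc.support, g i * phiF α₁ α₂ i m :=
            Finset.sum_subset hsupp (fun x _ hx => by
              rw [Finsupp.notMem_support_iff.mp hx, zero_mul])
        _ = (∑ i ∈ insert n cc.support, (Finsupp.single n (1:L)) i * phiF α₁ α₂ i m)
              - ∑ i ∈ insert n cc.support, cc i * phiF α₁ α₂ i m := by
            rw [← Finset.sum_sub_distrib]
            refine Finset.sum_congr rfl fun i _ => ?_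
            rw [hg, Finsupp.sub_apply, sub_mul]
        _ = phiF α₁ α₂ n m - phiF α₁ α₂ n m := by
            congr 1
            · rw [Finset.sum_eq_single_of_mem n (Finset.mem_insert_self n _)]
              · rw [Finsupp.single_eq_same, one_mul]
              · intro i _ hin
                rw [Finsupp.single_eq_of_ne' (Ne.symm hin), zero_mul]
            · rw [Finset.sum_insert hnot, hccn, zero_mul, zero_add]
              exact h1
        _ = 0 := sub_self _
    exact hdead g hglp (fun k hk1 _ => by
      rw [evalArr_eq_sum α₁ α₂ τ e hU g n k hk1]
      exact Finset.sum_eq_zero fun m hm => by rw [hev m hm, mul_zero])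
  -- the finite set of dead points
  set D₀ : Finset Pair := ((Finset.range (l.1 + 1)) ×ˢ (Finset.range (c + 1))) ∪
      ((Finset.Ico (c + 1) s2).image fun j => ((0:ℕ), j)) with hD₀
  have hdeadD : ∀ n ∈ D₀, (∀ g : Pair →₀ L, IsLP lt g n →
      (∀ k : Pair, Preceq n k → (lt k l ∨ k = l) → evalArr U g n k = 0) → False) := by
    intro n hn
    rw [hD₀, Finset.mem_union] at hn
    rcases hn with hn | hn
    · rw [Finset.mem_product, Finset.mem_range, Finset.mem_range] at hn
      obtain ⟨hn1, hn2⟩ := hn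
      exact claimC n (by omega) (by omega)
    · rw [Finset.mem_image] at hn
      obtain ⟨j, hj, rfl⟩ := hn
      rw [Finset.mem_Ico] at hj
      exact claimD j (by omega)
  have hnotspan : ∀ n ∈ D₀, Phi n ∉ Submodule.span L (Phi '' {m : Pair | lt m n}) :=
    fun n hn => claimSpan n (hdeadD n hn)
  -- linear independence
  have hli : LinearIndependent L (fun n : {x // x ∈ D₀} => Phi ↑n) := by
    rw [Fintype.linearIndependent_iff]
    intro gc hgc
    by_contra hex
    push_neg at hex
    obtain ⟨i₀, hi₀⟩ := hex
    obtain ⟨M, hMf, hmax⟩ := exists_lt_max hlt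
      (Finset.univ.filter fun i : {x // x ∈ D₀} => gc i ≠ 0) (fun i => (i : Pair))
      ⟨i₀, Finset.mem_filter.mpr ⟨Finset.mem_univ _, hi₀⟩⟩
    have hgcM : gc M ≠ 0 := (Finset.mem_filter.mp hMf).2
    have hsplit : gc M • Phi ↑M + ∑ i ∈ Finset.univ.erase M, gc i • Phi ↑i = 0 :=
      (Finset.add_sum_erase Finset.univ (fun i => gc i • Phi ↑i) (Finset.mem_univ M)).trans hgc
    have hPhiM : Phi ↑M = (-(gc M)⁻¹) • ∑ i ∈ Finset.univ.erase M, gc i • Phi ↑i := by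
      have h2 : gc M • Phi ↑M = -(∑ i ∈ Finset.univ.erase M, gc i • Phi ↑i) := by
        rw [eq_neg_iff_add_eq_zero]
        exact hsplit
      calc Phi (↑M : Pair) = (gc M)⁻¹ • (gc M • Phi ↑M) := by
            rw [smul_smul, inv_mul_cancel₀ hgcM, one_smul]
        _ = (gc M)⁻¹ • (-(∑ i ∈ Finset.univ.erase M, gc i • Phi ↑i)) := by rw [h2]
        _ = (-(gc M)⁻¹) • ∑ i ∈ Finset.univ.erase M, gc i • Phi ↑i := by
            rw [smul_neg, neg_smul]
    refine hnotspan (↑M) M.2 ?_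
    rw [hPhiM]
    refine Submodule.smul_mem _ _ (Submodule.sum_mem _ fun i hi => ?_)
    rcases eq_or_ne (gc i) 0 with h0 | h0
    · rw [h0, zero_smul]
      exact Submodule.zero_mem _
    · refine Submodule.smul_mem _ _ (Submodule.subset_span ?_)
      refine ⟨(i : Pair), ?_, rfl⟩
      rcases hmax i (Finset.mem_filter.mpr ⟨Finset.mem_univ _, h0⟩) with heq | hltiM
      · exfalso
        exact (Finset.mem_erase.mp hi).1 (Subtype.ext heq)
      · exact hltiM
  -- cardinality bounds
  have hcard_le : D₀.card ≤ e.support.card := by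
    have h1 := hli.fintype_card_le_finrank
    rwa [Module.finrank_pi, Fintype.card_coe, Fintype.card_coe] at h1
  have hdisj : Disjoint ((Finset.range (l.1 + 1)) ×ˢ (Finset.range (c + 1)))
      ((Finset.Ico (c + 1) s2).image fun j => ((0:ℕ), j)) := by
    rw [Finset.disjoint_left]
    intro p hp hq
    rw [Finset.mem_product, Finset.mem_range, Finset.mem_range] at hp
    rw [Finset.mem_image] at hq
    obtain ⟨j, hj, rfl⟩ := hq
    rw [Finset.mem_Ico] at hj
    have h2 : j < c + 1 := hp.2
    omega
  have hinj : Function.Injective (fun j : ℕ => ((0:ℕ), j)) := by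
    intro a b hab
    simpa using hab
  have hcards : D₀.card = (l.1 + 1) * (c + 1) + (s2 - (c + 1)) := by
    rw [hD₀, Finset.card_union_of_disjoint hdisj, Finset.card_product,
      Finset.card_image_of_injective _ hinj, Finset.card_range, Finset.card_range,
      Nat.card_Ico]
  obtain ⟨Y, hY1, hY2⟩ : ∃ Y, D₀.card = Y + (s2 - (c + 1)) ∧ 2 * c + l.1 + c + 1 ≤ Y := by
    refine ⟨(l.1 + 1) * (c + 1), hcards, ?_⟩
    have hmul : 2 * c ≤ l.1 * c := Nat.mul_le_mul_right c (by omega)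
    have hexp : (l.1 + 1) * (c + 1) = l.1 * c + l.1 + c + 1 := by ring
    rw [hexp]
    exact Nat.add_le_add_right (Nat.add_le_add_right (Nat.add_le_add_right hmul l.1) c) 1
  have hwt := hsetup.weight_le
  omega

end BMS
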